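/- For the group SU(1,1), with F_n(γ) defined for γ ∈ P⁺K_ℂN_ℂ by F_n(γ) = ψ_v(n_ℂ(γ)⁻¹) χ_n(k_ℂ(γ)⁻¹) where ψ_v(n_s) = e^{-ivs} and χ_n(k_θ) = e^{-inθ/2}, one has the modulus formula |F_n(k_θ a_t n)|² = e^{-2nt} e^{v(1 - e^{-2t})} for all θ, t ∈ ℝ and n ∈ N. Consequently, using the invariant measure ∫_{G/N} f dμ = (1/4π)∫₀^{4π}∫_ℝ f(k_θ a_t N) e^{2t} dt dθ, the function F_n lies in L²(G/N, ψ_v) if and only if n > 1 and v > 0. -/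

import Mathlib

open Matrix MeasureTheory

noncomputable def kθmat (θ : ℝ) : Matrix (Fin 2) (Fin 2) ℂ :=
  !![Complex.exp (Complex.I * θ / 2), 0; 0, Complex.exp (-(Complex.I * θ / 2))]

noncomputable def amat (t : ℝ) : Matrix (Fin 2) (Fin 2) ℂ :=
  !![(Real.cosh t : ℂ), (Real.sinh t : ℂ); (Real.sinh t : ℂ), (Real.cosh t : ℂ)]

noncomputable def nmat (s : ℂ) : Matrix (Fin 2) (Fin 2) ℂ :=
  !![1 + Complex.I * s, -(Complex.I * s); Complex.I * s, 1 - Complex.I * s]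

/-- `F_n(g) = ψ_v(n_ℂ(g)⁻¹) χ_n(k_ℂ(g)⁻¹)` for `g ∈ P⁺K_ℂN_ℂ`, where for
`g = [[a,b],[c,d]]` the `K_ℂ`-projection has parameter `γ = 1/(c+d)` and the
`N_ℂ`-projection has parameter `s = -ic/(c+d)`; so
`F_n(g) = e^{iv·s(g)} (c+d)^{-n}`. -/
noncomputable def Fwhit (n : ℤ) (v : ℝ) (g : Matrix (Fin 2) (Fin 2) ℂ) : ℂ :=
  Complex.exp (Complex.I * v * (-Complex.I * g 1 0 / (g 1 0 + g 1 1))) *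
    (g 1 0 + g 1 1) ^ (-n)

lemma entry10 (θ t x : ℝ) :
    (kθmat θ * amat t * nmat (x:ℂ)) 1 0
      = Complex.exp (-(Complex.I * θ / 2)) * (Real.sinh t + Complex.I * x * Real.exp t) := by
  simp [kθmat, amat, nmat, Matrix.mul_apply, Fin.sum_univ_two]
  linear_combination (Complex.exp (-(Complex.I * θ / 2)) * Complex.I * (x:ℂ)) *
    Complex.cosh_add_sinh (t:ℂ)

lemma entry11 (θ t x : ℝ) :
    (kθmat θ * amat t * nmat (x:ℂ)) 1 1
      = Complex.exp (-(Complex.I * θ / 2)) * (Real.cosh t - Complex.I * x * Real.exp t) := by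
  simp [kθmat, amat, nmat, Matrix.mul_apply, Fin.sum_univ_two]
  linear_combination (-(Complex.exp (-(Complex.I * θ / 2)) * Complex.I * (x:ℂ))) *
    Complex.cosh_add_sinh (t:ℂ)

lemma exp_zpow (t : ℝ) (m : ℤ) : Real.exp t ^ m = Real.exp (m * t) := by
  rw [← Real.rpow_intCast, ← Real.exp_mul, mul_comm]

lemma abs_sq_F (n : ℤ) (v θ t x : ℝ) :
    ‖Fwhit n v (kθmat θ * amat t * nmat (x:ℂ))‖ ^ 2
      = Real.exp (-2 * n * t) * Real.exp (v * (1 - Real.exp (-2 * t))) := by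
  have hEne : Complex.exp (-(Complex.I * θ / 2)) ≠ 0 := Complex.exp_ne_zero _
  have hexpne : ((Real.exp t : ℝ) : ℂ) ≠ 0 := by
    simpa using Real.exp_ne_zero t
  have h10 := entry10 θ t x
  have h11 := entry11 θ t x
  have hsum : (kθmat θ * amat t * nmat (x:ℂ)) 1 0 + (kθmat θ * amat t * nmat (x:ℂ)) 1 1
      = Complex.exp (-(Complex.I * θ / 2)) * Real.exp t := by
    rw [h10, h11]
    have hc : ((Real.exp t : ℝ) : ℂ) = (Real.cosh t : ℂ) + (Real.sinh t : ℂ) := by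
      push_cast
      rw [← Complex.cosh_add_sinh]
    rw [hc]; ring
  have hq : (kθmat θ * amat t * nmat (x:ℂ)) 1 0 /
        ((kθmat θ * amat t * nmat (x:ℂ)) 1 0 + (kθmat θ * amat t * nmat (x:ℂ)) 1 1)
      = ((Real.sinh t * Real.exp (-t) : ℝ) : ℂ) + Complex.I * x := by
    rw [hsum, h10, div_eq_iff (mul_ne_zero hEne hexpne)]
    push_cast [Real.exp_neg]
    field_simp
  have hw : Complex.I * v * (-Complex.I * (kθmat θ * amat t * nmat (x:ℂ)) 1 0 /
        ((kθmat θ * amat t * nmat (x:ℂ)) 1 0 + (kθmat θ * amat t * nmat (x:ℂ)) 1 1))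
      = ((v * (Real.sinh t * Real.exp (-t)) : ℝ) : ℂ) + Complex.I * (v * x) := by
    rw [show (-Complex.I * (kθmat θ * amat t * nmat (x:ℂ)) 1 0 /
        ((kθmat θ * amat t * nmat (x:ℂ)) 1 0 + (kθmat θ * amat t * nmat (x:ℂ)) 1 1))
        = -Complex.I * ((kθmat θ * amat t * nmat (x:ℂ)) 1 0 /
        ((kθmat θ * amat t * nmat (x:ℂ)) 1 0 + (kθmat θ * amat t * nmat (x:ℂ)) 1 1)) by ring,
      hq]
    push_cast
    linear_combination (-(Complex.I * (v:ℂ) * (x:ℂ)) - (v:ℂ) * Complex.sinh (t:ℂ) * Complex.exp (-(t:ℂ))) * Complex.I_sq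
  unfold Fwhit
  rw [norm_mul, Complex.norm_exp, hw, norm_zpow, hsum,
    norm_mul, Complex.norm_exp]
  have hre1 : ∀ a b c : ℝ, ((a : ℂ) + Complex.I * ((b:ℂ) * (c:ℂ))).re = a := by
    intro a b c; simp
  have hre2 : (-(Complex.I * (θ:ℂ) / 2)).re = 0 := by
    simp
  rw [hre1, hre2, Real.exp_zero, one_mul, Complex.norm_real, Real.norm_eq_abs,
    abs_of_pos (Real.exp_pos t), exp_zpow]
  have key : v * (Real.sinh t * Real.exp (-t)) + v * (Real.sinh t * Real.exp (-t))
      = v * (1 - Real.exp (-2 * t)) := by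
    have h1 : Real.exp (-t) * Real.exp t = 1 := by
      rw [← Real.exp_add]; simp
    have h2 : Real.exp (-2 * t) = Real.exp (-t) * Real.exp (-t) := by
      rw [← Real.exp_add]; ring_nf
    rw [Real.sinh_eq, h2]
    linear_combination v * h1
  rw [mul_pow,
    show (Real.exp (v * (Real.sinh t * Real.exp (-t))))^2
      = Real.exp (v * (Real.sinh t * Real.exp (-t)) + v * (Real.sinh t * Real.exp (-t))) by
      rw [Real.exp_add]; ring,
    key,
    show (Real.exp ((-n : ℤ) * t))^2 = Real.exp ((-n:ℤ)*t + (-n:ℤ)*t) by rw [Real.exp_add]; ring,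
    show ((-n : ℤ) : ℝ) * t + ((-n : ℤ) : ℝ) * t = -2 * (n:ℝ) * t by push_cast; ring]
  exact mul_comm _ _

noncomputable def Gfun (n : ℤ) (v : ℝ) (t : ℝ) : ℝ :=
  Real.exp ((2 - 2*(n:ℝ)) * t + v * (1 - Real.exp (-2*t)))

lemma Gcont (n : ℤ) (v : ℝ) : Continuous (Gfun n v) := by
  unfold Gfun; fun_prop

lemma not_integrableOn_of_one_le {g : ℝ → ℝ} {s : Set ℝ}
    (hs : MeasurableSet s) (hvol : volume s = ⊤) (h1 : ∀ t ∈ s, 1 ≤ g t) :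
    ¬ IntegrableOn g s := by
  intro h
  have hone : Integrable (fun _ : ℝ => (1:ℝ)) (volume.restrict s) := by
    refine h.mono' aestronglyMeasurable_const ?_
    rw [ae_restrict_iff' hs]
    filter_upwards with t ht
    simpa using (h1 t ht)
  rw [integrable_const_iff] at hone
  rcases hone with h' | h'
  · exact one_ne_zero h'
  · have h' := h'.measure_univ_lt_top; rw [Measure.restrict_apply_univ, hvol] at h'
    exact (lt_irrefl _ h').elim

lemma sq_bound {t : ℝ} (ht : t ≤ 0) : (1 - t)^2 ≤ Real.exp (-2*t) := by
  have h1 : (0:ℝ) ≤ 1 - t := by linarith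
  have h2 : 1 - t ≤ Real.exp (-t) := by
    have := Real.add_one_le_exp (-t)
    linarith
  have h3 : Real.exp (-2*t) = Real.exp (-t) * Real.exp (-t) := by
    rw [← Real.exp_add]; ring_nf
  rw [h3]
  nlinarith

lemma integrable_G (n : ℤ) (v : ℝ) (hn : 1 < n) (hv : 0 < v) :
    Integrable (Gfun n v) := by
  have hn' : (2:ℝ) - 2*(n:ℝ) ≤ -2 := by
    have : (2:ℝ) ≤ (n:ℝ) := by exact_mod_cast hn
    linarith
  rw [← integrableOn_univ, ← Set.Iic_union_Ioi (a := (0:ℝ))]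
  apply IntegrableOn.union
  · -- Gaussian bound on Iic 0
    have hB : Integrable (fun t : ℝ =>
        Real.exp ((2 - 2*(n:ℝ) + 2*v)^2/(4*v)) *
          Real.exp (-v * (t - (2 - 2*(n:ℝ) + 2*v)/(2*v))^2)) := by
      exact ((integrable_exp_neg_mul_sq hv).comp_sub_right
        ((2 - 2*(n:ℝ) + 2*v)/(2*v))).const_mul _
    refine Integrable.mono' (hB.integrableOn) ((Gcont n v).aestronglyMeasurable) ?_
    rw [ae_restrict_iff' measurableSet_Iic]
    filter_upwards with t ht
    unfold Gfun
    rw [Real.norm_eq_abs, abs_of_pos (Real.exp_pos _), ← Real.exp_add]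
    apply Real.exp_le_exp.mpr
    have hsq := sq_bound ht
    have hmul : v * (1-t)^2 ≤ v * Real.exp (-2*t) := mul_le_mul_of_nonneg_left hsq hv.le
    have : (2 - 2*(n:ℝ) + 2*v)^2/(4*v) + (-v * (t - (2 - 2*(n:ℝ) + 2*v)/(2*v))^2)
        = (2 - 2*(n:ℝ) + 2*v) * t - v * t^2 := by
      field_simp
      ring
    rw [this]
    nlinarith
  · -- exponential bound on Ioi 0
    have hB : IntegrableOn (fun t : ℝ => Real.exp v * Real.exp (-(2*(n:ℝ) - 2) * t))
        (Set.Ioi 0) := by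
      exact (exp_neg_integrableOn_Ioi 0 (by linarith : (0:ℝ) < 2*(n:ℝ) - 2)).const_mul _
    refine Integrable.mono' hB ((Gcont n v).aestronglyMeasurable) ?_
    rw [ae_restrict_iff' measurableSet_Ioi]
    filter_upwards with t ht
    unfold Gfun
    rw [Real.norm_eq_abs, abs_of_pos (Real.exp_pos _), ← Real.exp_add]
    apply Real.exp_le_exp.mpr
    have : 0 < Real.exp (-2*t) := Real.exp_pos _
    nlinarith

lemma not_integrable_G (n : ℤ) (v : ℝ) (h : ¬ (1 < n ∧ 0 < v)) :
    ¬ Integrable (Gfun n v) := by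
  intro hint
  rcases lt_trichotomy v 0 with hv | hv | hv
  · -- v < 0 : G ≥ 1 far to the left
    set w : ℝ := -v with hwdef
    have hw : 0 < w := by simp [hwdef]; linarith
    set T : ℝ := -|2 - 2*(n:ℝ)| / w with hT
    refine not_integrableOn_of_one_le measurableSet_Iic
      (Real.volume_Iic) ?_ (hint.integrableOn (s := Set.Iic T))
    intro t ht
    simp only [Set.mem_Iic] at ht
    have hT0 : T ≤ 0 := by
      apply div_nonpos_of_nonpos_of_nonneg
      · simp [abs_nonneg]
      · exact hw.le
    have ht0 : t ≤ 0 := le_trans ht hT0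
    have h1 : t * w ≤ -|2 - 2*(n:ℝ)| := by
      rwa [le_div_iff₀ hw] at ht
    have habs : 2 - 2*(n:ℝ) ≤ |2 - 2*(n:ℝ)| := le_abs_self _
    have hsq := sq_bound ht0
    unfold Gfun
    rw [Real.one_le_exp_iff]
    nlinarith [mul_le_mul_of_nonneg_left hsq hw.le, abs_nonneg (2 - 2*(n:ℝ))]
  · -- v = 0
    subst hv
    rcases le_or_gt n 1 with hn | hn
    · -- exponent coefficient ≥ 0: not integrable on Ici 0
      refine not_integrableOn_of_one_le measurableSet_Ici
        (Real.volume_Ici) ?_ (hint.integrableOn (s := Set.Ici 0))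
      intro t ht
      simp only [Set.mem_Ici] at ht
      have : (n:ℝ) ≤ 1 := by exact_mod_cast hn
      unfold Gfun
      rw [Real.one_le_exp_iff]
      nlinarith
    · refine not_integrableOn_of_one_le measurableSet_Iic
        (Real.volume_Iic) ?_ (hint.integrableOn (s := Set.Iic 0))
      intro t ht
      simp only [Set.mem_Iic] at ht
      have : (2:ℝ) ≤ (n:ℝ) := by exact_mod_cast hn
      unfold Gfun
      rw [Real.one_le_exp_iff]
      nlinarith
  · -- v > 0, so n ≤ 1
    have hn : n ≤ 1 := by
      by_contra hn'
      exact h ⟨lt_of_not_ge hn', hv⟩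
    have hn' : (n:ℝ) ≤ 1 := by exact_mod_cast hn
    refine not_integrableOn_of_one_le measurableSet_Ici
      (Real.volume_Ici) ?_ (hint.integrableOn (s := Set.Ici 0))
    intro t ht
    simp only [Set.mem_Ici] at ht
    have hle : Real.exp (-2*t) ≤ 1 := by
      rw [Real.exp_le_one_iff]; linarith
    unfold Gfun
    rw [Real.one_le_exp_iff]
    nlinarith

lemma prod_integrable_iff (G : ℝ → ℝ) :
    IntegrableOn (fun p : ℝ × ℝ => G p.2)
        (Set.Ioc 0 (4 * Real.pi) ×ˢ (Set.univ : Set ℝ))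
      ↔ Integrable G := by
  have hfin : IsFiniteMeasure (volume.restrict (Set.Ioc 0 (4 * Real.pi))) := by
    constructor
    rw [Measure.restrict_apply_univ, Real.volume_Ioc]
    exact ENNReal.ofReal_lt_top
  have hne : volume.restrict (Set.Ioc 0 (4 * Real.pi)) ≠ 0 := by
    rw [Ne, Measure.restrict_eq_zero, Real.volume_Ioc]
    rw [ENNReal.ofReal_eq_zero, not_le]
    have := Real.pi_pos
    linarith
  unfold IntegrableOn
  rw [Measure.volume_eq_prod, ← Measure.prod_restrict, Measure.restrict_univ]
  constructor
  · intro h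
    haveI : (ae (volume.restrict (Set.Ioc 0 (4 * Real.pi)))).NeBot := ae_neBot.mpr hne
    obtain ⟨θ0, hθ0⟩ := h.prod_right_ae.exists
    exact hθ0
  · intro h
    haveI := hfin
    have := (integrable_const (c := (1:ℝ))
      (μ := volume.restrict (Set.Ioc 0 (4 * Real.pi)))).mul_prod h
    simpa using this

/-- `|F_n(k_θ a_t n_x)|² = e^{-2nt} e^{v(1-e^{-2t})}`, and with respect to
the invariant measure `(1/4π)∫₀^{4π}∫_ℝ (·) e^{2t} dt dθ` on `G/N`, the function `F_n`
is square-integrable iff `n > 1` and `v > 0`. -/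
theorem Fwhit_modulus_and_L2 (n : ℤ) (v : ℝ) :
    (∀ θ t x : ℝ,
      ‖Fwhit n v (kθmat θ * amat t * nmat (x : ℂ))‖ ^ 2
        = Real.exp (-2 * n * t) * Real.exp (v * (1 - Real.exp (-2 * t)))) ∧
    (IntegrableOn
        (fun p : ℝ × ℝ =>
          ‖Fwhit n v (kθmat p.1 * amat p.2)‖ ^ 2 * Real.exp (2 * p.2))
        (Set.Ioc 0 (4 * Real.pi) ×ˢ (Set.univ : Set ℝ))
      ↔ 1 < n ∧ 0 < v) := by
  constructor
  · intro θ t x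
    exact abs_sq_F n v θ t x
  · have hpt : (fun p : ℝ × ℝ =>
        ‖Fwhit n v (kθmat p.1 * amat p.2)‖ ^ 2 * Real.exp (2 * p.2))
        = fun p : ℝ × ℝ => Gfun n v p.2 := by
      funext p
      have hone : nmat ((0:ℝ) : ℂ) = 1 := by
        simp [nmat, Matrix.one_fin_two]
      have h0 : kθmat p.1 * amat p.2 = kθmat p.1 * amat p.2 * nmat ((0:ℝ) : ℂ) := by
        rw [hone, mul_one]
      rw [h0, abs_sq_F n v p.1 p.2 0]
      unfold Gfun
      rw [← Real.exp_add, ← Real.exp_add]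
      congr 1
      push_cast
      ring
    rw [hpt, prod_integrable_iff]
    constructor
    · intro h
      by_contra hc
      exact not_integrable_G n v hc h
    · rintro ⟨h1, h2⟩
      exact integrable_G n v h1 h2
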